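/- Let X, Y be independent standard Gaussian random variables. Then for all ε ∈ (0,1], E[ ε(sX + √(1−s²)Y)² / (ε + X²) ] ≤ C√ε for some absolute constant C, uniformly over s ∈ [−1,1]. -/
import Mathlib

open MeasureTheory ProbabilityTheory Real
open scoped NNReal ENNReal

-- density conversion
lemma gauss_int_eq (f : ℝ → ℝ) :
    ∫ x, f x ∂(gaussianReal 0 1) = ∫ x, gaussianPDFReal 0 1 x * f x := by
  rw [gaussianReal_of_var_ne_zero 0 one_ne_zero]
  have h : volume.withDensity (gaussianPDF 0 1)
      = volume.withDensity (fun x => ((gaussianPDFReal 0 1 x).toNNReal : ℝ≥0∞)) := rfl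
  rw [h, integral_withDensity_eq_integral_smul
    ((measurable_gaussianPDFReal 0 1).real_toNNReal)]
  congr 1
  ext x
  simp [NNReal.smul_def, Real.coe_toNNReal _ (gaussianPDFReal_nonneg 0 1 x)]

lemma gauss_integrable_iff (f : ℝ → ℝ) :
    Integrable f (gaussianReal 0 1) ↔ Integrable (fun x => gaussianPDFReal 0 1 x * f x) := by
  rw [gaussianReal_of_var_ne_zero 0 one_ne_zero]
  have h : volume.withDensity (gaussianPDF 0 1)
      = volume.withDensity (fun x => ((gaussianPDFReal 0 1 x).toNNReal : ℝ≥0∞)) := rfl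
  rw [h, integrable_withDensity_iff_integrable_smul
    ((measurable_gaussianPDFReal 0 1).real_toNNReal)]
  constructor <;> intro hh <;> refine hh.congr (Filter.Eventually.of_forall fun x => ?_) <;>
    simp [NNReal.smul_def, Real.coe_toNNReal _ (gaussianPDFReal_nonneg 0 1 x)]

lemma gauss_pdf_le (x : ℝ) : gaussianPDFReal 0 1 x ≤ (1:ℝ)/2 * Real.exp (-x^2/2) := by
  unfold gaussianPDFReal
  have h2 : (2:ℝ) ≤ Real.sqrt (2 * π * (1:ℝ≥0)) := by
    rw [show ((1:ℝ≥0):ℝ) = 1 by norm_num, mul_one]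
    apply Real.le_sqrt_of_sq_le
    nlinarith [Real.pi_gt_three]
  have h3 : (Real.sqrt (2 * π * (1:ℝ≥0)))⁻¹ ≤ 1/2 := by
    rw [inv_le_comm₀ (by linarith) (by norm_num)]
    simpa using h2
  have h4 : (0:ℝ) < Real.exp (-(x - 0)^2 / (2 * (1:ℝ≥0))) := Real.exp_pos _
  calc (Real.sqrt (2 * π * (1:ℝ≥0)))⁻¹ * Real.exp (-(x - 0)^2 / (2 * (1:ℝ≥0)))
      ≤ 1/2 * Real.exp (-(x - 0)^2 / (2 * (1:ℝ≥0))) := by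
        apply mul_le_mul_of_nonneg_right h3 (le_of_lt h4)
    _ = 1/2 * Real.exp (-x^2/2) := by norm_num

lemma gauss_pdf_le_half (x : ℝ) : gaussianPDFReal 0 1 x ≤ 1/2 := by
  refine (gauss_pdf_le x).trans ?_
  have : Real.exp (-x^2/2) ≤ 1 := Real.exp_le_one_iff.mpr (by nlinarith [sq_nonneg x])
  nlinarith [Real.exp_pos (-x^2/2)]

lemma gauss_eps_bound {ε : ℝ} (hε : 0 < ε) :
    ∫ x, ε / (ε + x ^ 2) ∂(gaussianReal 0 1) ≤ π / 2 * Real.sqrt ε := by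
  rw [gauss_int_eq]
  have hu : 0 < Real.sqrt ε := Real.sqrt_pos.mpr hε
  have hu2 : Real.sqrt ε ^ 2 = ε := Real.sq_sqrt hε.le
  have hfun : (fun x : ℝ => ε / (ε + x ^ 2))
      = fun x => (fun y : ℝ => (1 + y ^ 2)⁻¹) (x / Real.sqrt ε) := by
    funext x
    have hd : 0 < ε + x ^ 2 := by positivity
    simp only
    rw [div_pow, hu2, eq_comm, inv_eq_iff_eq_inv, eq_comm, inv_div]
    field_simp
  have hint : Integrable (fun x : ℝ => ε / (ε + x ^ 2)) := by
    rw [hfun]; exact integrable_inv_one_add_sq.comp_div hu.ne'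
  have hnn : ∀ x : ℝ, 0 ≤ ε / (ε + x ^ 2) := fun x => by positivity
  calc ∫ x, gaussianPDFReal 0 1 x * (ε / (ε + x ^ 2))
      ≤ ∫ x, (1/2) * (ε / (ε + x ^ 2)) := by
        refine integral_mono_of_nonneg (Filter.Eventually.of_forall fun x =>
          mul_nonneg (gaussianPDFReal_nonneg 0 1 x) (hnn x)) (hint.const_mul _)
          (Filter.Eventually.of_forall fun x =>
            mul_le_mul_of_nonneg_right (gauss_pdf_le_half x) (hnn x))
    _ = (1/2) * ∫ x, ε / (ε + x ^ 2) := integral_const_mul _ _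
    _ = (1/2) * (Real.sqrt ε * π) := by
        rw [hfun, MeasureTheory.Measure.integral_comp_div (fun y : ℝ => (1 + y ^ 2)⁻¹),
          integral_univ_inv_one_add_sq, smul_eq_mul, abs_of_pos hu]
    _ = π / 2 * Real.sqrt ε := by ring

lemma pdf_mul_sq_le (x : ℝ) :
    gaussianPDFReal 0 1 x * x ^ 2 ≤ 2 * Real.exp (-(1/4:ℝ) * x ^ 2) := by
  have h1 : gaussianPDFReal 0 1 x * x ^ 2 ≤ (1/2) * Real.exp (-x^2/2) * x ^ 2 :=
    mul_le_mul_of_nonneg_right (gauss_pdf_le x) (sq_nonneg x)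
  have h2 : Real.exp (-x^2/2) = Real.exp (-(1/4:ℝ) * x^2) * Real.exp (-(1/4:ℝ) * x^2) := by
    rw [← Real.exp_add]; ring_nf
  have h3 : x ^ 2 * Real.exp (-(1/4:ℝ) * x^2) ≤ 4 := by
    have he : Real.exp (-(1/4:ℝ) * x^2) = (Real.exp (x^2/4))⁻¹ := by
      rw [← Real.exp_neg]; ring_nf
    rw [he]
    calc x ^ 2 * (Real.exp (x^2/4))⁻¹ = x^2 / Real.exp (x^2/4) := by ring
      _ ≤ 4 := by
        rw [div_le_iff₀ (Real.exp_pos _)]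
        nlinarith [Real.add_one_le_exp (x^2/4), Real.exp_pos (x^2/4), sq_nonneg x]
  calc gaussianPDFReal 0 1 x * x ^ 2
      ≤ (1/2) * Real.exp (-x^2/2) * x ^ 2 := h1
    _ = (1/2) * (x ^ 2 * Real.exp (-(1/4:ℝ) * x^2)) * Real.exp (-(1/4:ℝ) * x^2) := by
        rw [h2]; ring
    _ ≤ (1/2) * 4 * Real.exp (-(1/4:ℝ) * x^2) := by
        have := Real.exp_pos (-(1/4:ℝ) * x^2)
        nlinarith
    _ = 2 * Real.exp (-(1/4:ℝ) * x ^ 2) := by ring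

lemma gauss_sq_integrable : Integrable (fun x : ℝ => x ^ 2) (gaussianReal 0 1) := by
  rw [gauss_integrable_iff]
  have hmaj : Integrable (fun x : ℝ => 2 * Real.exp (-(1/4 : ℝ) * x ^ 2)) :=
    (integrable_exp_neg_mul_sq (by norm_num : (0:ℝ) < 1/4)).const_mul 2
  refine hmaj.mono' ?_ (Filter.Eventually.of_forall fun x => ?_)
  · exact ((measurable_gaussianPDFReal 0 1).mul (measurable_id.pow_const 2)).aestronglyMeasurable
  · rw [Real.norm_eq_abs, abs_of_nonneg
      (mul_nonneg (gaussianPDFReal_nonneg 0 1 x) (sq_nonneg x))]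
    exact pdf_mul_sq_le x

lemma gauss_sq_bound : ∫ x, x ^ 2 ∂(gaussianReal 0 1) ≤ 8 := by
  rw [gauss_int_eq]
  have hmaj : Integrable (fun x : ℝ => 2 * Real.exp (-(1/4 : ℝ) * x ^ 2)) :=
    (integrable_exp_neg_mul_sq (by norm_num : (0:ℝ) < 1/4)).const_mul 2
  calc ∫ x, gaussianPDFReal 0 1 x * x ^ 2
      ≤ ∫ x, 2 * Real.exp (-(1/4:ℝ) * x ^ 2) := by
        refine integral_mono_of_nonneg (Filter.Eventually.of_forall fun x =>
          mul_nonneg (gaussianPDFReal_nonneg 0 1 x) (sq_nonneg x)) hmaj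
          (Filter.Eventually.of_forall pdf_mul_sq_le)
    _ = 2 * Real.sqrt (π / (1/4)) := by
        rw [integral_const_mul, integral_gaussian]
    _ ≤ 8 := by
        have h4 : Real.sqrt (π / (1/4)) ≤ 4 := by
          have : Real.sqrt (π / (1/4)) ≤ Real.sqrt 16 :=
            Real.sqrt_le_sqrt (by nlinarith [Real.pi_le_four])
          rwa [show (16:ℝ) = 4^2 by norm_num,
            Real.sqrt_sq (by norm_num : (0:ℝ) ≤ 4)] at this
        linarith

theorem expectation_sqrt_eps_bound :
    ∃ C : ℝ, 0 < C ∧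
      ∀ ε : ℝ, 0 < ε → ε ≤ 1 → ∀ s : ℝ, -1 ≤ s → s ≤ 1 →
        (∫ p : ℝ × ℝ,
            ε * (s * p.1 + Real.sqrt (1 - s ^ 2) * p.2) ^ 2 / (ε + p.1 ^ 2)
            ∂((gaussianReal 0 1).prod (gaussianReal 0 1))) ≤
          C * Real.sqrt ε := by
  refine ⟨40, by norm_num, fun ε hε hε1 s hs1 hs2 => ?_⟩
  set γ := gaussianReal 0 1 with hγ
  have hcont : Continuous (fun x : ℝ => ε / (ε + x ^ 2)) :=
    continuous_const.div (by continuity) (fun x => by positivity)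
  have hint1 : Integrable (fun x : ℝ => ε / (ε + x ^ 2)) γ := by
    refine (integrable_const (1:ℝ)).mono' hcont.aestronglyMeasurable
      (Filter.Eventually.of_forall fun x => ?_)
    rw [Real.norm_eq_abs, abs_of_nonneg (by positivity)]
    rw [div_le_one (by positivity)]
    nlinarith [sq_nonneg x]
  have hint2 : Integrable (fun x : ℝ => x ^ 2) γ := gauss_sq_integrable
  have hprod : Integrable (fun p : ℝ × ℝ => (ε / (ε + p.1 ^ 2)) * p.2 ^ 2) (γ.prod γ) :=
    hint1.mul_prod hint2
  have hg : Integrable (fun p : ℝ × ℝ => 2 * ε + 2 * ((ε / (ε + p.1 ^ 2)) * p.2 ^ 2))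
      (γ.prod γ) := (integrable_const _).add (hprod.const_mul 2)
  have hs0 : (0:ℝ) ≤ 1 - s ^ 2 := by nlinarith
  have ht2 : Real.sqrt (1 - s ^ 2) ^ 2 = 1 - s ^ 2 := Real.sq_sqrt hs0
  have key : ∀ p : ℝ × ℝ, ε * (s * p.1 + Real.sqrt (1 - s ^ 2) * p.2) ^ 2 / (ε + p.1 ^ 2)
      ≤ 2 * ε + 2 * ((ε / (ε + p.1 ^ 2)) * p.2 ^ 2) := by
    rintro ⟨x, y⟩
    simp only
    have hd : 0 < ε + x ^ 2 := by positivity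
    rw [div_le_iff₀ hd]
    have hsq : (s * x + Real.sqrt (1 - s ^ 2) * y) ^ 2 ≤ 2 * x ^ 2 + 2 * y ^ 2 := by
      nlinarith [sq_nonneg (s * x - Real.sqrt (1 - s ^ 2) * y), ht2,
        mul_nonneg hs0 (sq_nonneg x), mul_nonneg (sq_nonneg s) (sq_nonneg y)]
    have hcancel : (ε / (ε + x ^ 2)) * (ε + x ^ 2) = ε := div_mul_cancel₀ ε hd.ne'
    nlinarith [mul_le_mul_of_nonneg_left hsq hε.le, sq_nonneg x, sq_nonneg y,
      mul_nonneg hε.le (sq_nonneg x), mul_nonneg hε.le (sq_nonneg y), sq_nonneg ε]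
  have hB : ∫ x, ε / (ε + x ^ 2) ∂γ ≤ π / 2 * Real.sqrt ε := gauss_eps_bound hε
  have hB0 : 0 ≤ ∫ x, ε / (ε + x ^ 2) ∂γ :=
    integral_nonneg fun x => by positivity
  have hM : ∫ x, x ^ 2 ∂γ ≤ 8 := gauss_sq_bound
  have hM0 : 0 ≤ ∫ x : ℝ, x ^ 2 ∂γ := integral_nonneg fun x => sq_nonneg x
  have hse : ε ≤ Real.sqrt ε := by
    nlinarith [Real.sq_sqrt hε.le, Real.sqrt_le_one.mpr hε1, Real.sqrt_nonneg ε]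
  calc (∫ p : ℝ × ℝ, ε * (s * p.1 + Real.sqrt (1 - s ^ 2) * p.2) ^ 2 / (ε + p.1 ^ 2)
        ∂(γ.prod γ))
      ≤ ∫ p : ℝ × ℝ, 2 * ε + 2 * ((ε / (ε + p.1 ^ 2)) * p.2 ^ 2) ∂(γ.prod γ) := by
        refine integral_mono_of_nonneg (Filter.Eventually.of_forall fun p => ?_) hg
          (Filter.Eventually.of_forall key)
        positivity
    _ = 2 * ε + 2 * ((∫ x, ε / (ε + x ^ 2) ∂γ) * ∫ x : ℝ, x ^ 2 ∂γ) := by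
        rw [integral_add (integrable_const _) (hprod.const_mul 2), integral_const,
          integral_const_mul,
          integral_prod_mul (fun x : ℝ => ε / (ε + x ^ 2)) (fun x : ℝ => x ^ 2)]
        simp [measure_univ]
    _ ≤ 40 * Real.sqrt ε := by
        have hBM : (∫ x, ε / (ε + x ^ 2) ∂γ) * ∫ x : ℝ, x ^ 2 ∂γ
            ≤ (π / 2 * Real.sqrt ε) * 8 :=
          mul_le_mul hB hM hM0 (by positivity)
        nlinarith [Real.pi_le_four, Real.sqrt_nonneg ε]
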